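/- arXiv:2308.00753 — 4 statements merged into one kernel-verified Lean document; each statement's English description precedes it below -/
import Mathlib

section
/- Let S_1, …, S_n be self-adjoint unitary matrices that pairwise anticommute, and let ρ be a density matrix. Then Σ_{i=1}^n (tr(ρ S_i))² ≤ 1. -/
open Matrix ComplexOrder

lemma psd_trace_re_nonneg {d : ℕ} {M : Matrix (Fin d) (Fin d) ℂ}
    (hM : M.PosSemidef) : 0 ≤ M.trace.re := by
  have h : ∀ i, 0 ≤ (M i i).re := by
    intro i
    have := hM.re_dotProduct_nonneg (Pi.single i 1)
    simpa [dotProduct, mulVec, Pi.single_apply, Finset.sum_ite_eq,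
      Finset.sum_ite_eq'] using this
  have : M.trace = ∑ i, M i i := rfl
  rw [this, Complex.re_sum]
  exact Finset.sum_nonneg fun i _ => h i

/-- For pairwise anticommuting self-adjoint unitaries `S_i` and any density matrix `ρ`,
`Σ_i (tr ρ S_i)² ≤ 1`. -/
theorem sum_sq_expectation_le_one_of_anticommuting {n d : ℕ}
    (S : Fin n → Matrix (Fin d) (Fin d) ℂ)
    (hherm : ∀ i, (S i).IsHermitian)
    (hsq : ∀ i, S i * S i = 1)
    (hanti : ∀ i j, i ≠ j → S i * S j + S j * S i = 0)
    (ρ : Matrix (Fin d) (Fin d) ℂ) (hρ : ρ.PosSemidef) (htr : ρ.trace = 1) :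
    ∑ i, ((ρ * S i).trace.re)^2 ≤ 1 := by
  set t : Fin n → ℝ := fun i => ((ρ * S i).trace).re with ht
  set s : ℝ := ∑ i, (t i)^2 with hs
  have hs0 : 0 ≤ s := Finset.sum_nonneg fun i _ => sq_nonneg _
  show s ≤ 1
  rcases eq_or_lt_of_le hs0 with hse | hsp
  · rw [← hse]; norm_num
  set c : ℝ := Real.sqrt s with hc
  have hcp : 0 < c := Real.sqrt_pos.mpr hsp
  have hcc : c * c = s := Real.mul_self_sqrt hs0
  set T : Matrix (Fin d) (Fin d) ℂ := ∑ i, (t i : ℂ) • S i with hT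
  -- T is Hermitian
  have hTherm : T.IsHermitian := by
    unfold T
    unfold Matrix.IsHermitian
    rw [conjTranspose_sum]
    refine Finset.sum_congr rfl fun i _ => ?_
    rw [conjTranspose_smul, (hherm i).eq]
    congr 1
    simp
  -- T * T = s • 1
  have hT2 : T * T = (s : ℂ) • 1 := by
    have expand : T * T = ∑ i, ∑ j, ((t i * t j : ℝ) : ℂ) • (S i * S j) := by
      unfold T
      rw [Finset.sum_mul_sum]
      refine Finset.sum_congr rfl fun i _ => Finset.sum_congr rfl fun j _ => ?_
      rw [smul_mul_smul_comm]
      push_cast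
      ring_nf
    have swap : T * T = ∑ i, ∑ j, ((t i * t j : ℝ) : ℂ) • (S j * S i) := by
      rw [expand, Finset.sum_comm]
      refine Finset.sum_congr rfl fun i _ => Finset.sum_congr rfl fun j _ => ?_
      rw [mul_comm (t j) (t i)]
    have key : T * T + T * T = ∑ i, ∑ j, ((t i * t j : ℝ) : ℂ) • (S i * S j + S j * S i) := by
      nth_rewrite 1 [expand]
      nth_rewrite 1 [swap]
      rw [← Finset.sum_add_distrib]
      refine Finset.sum_congr rfl fun i _ => ?_
      rw [← Finset.sum_add_distrib]
      refine Finset.sum_congr rfl fun j _ => ?_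
      rw [smul_add]
    have inner : ∀ i : Fin n,
        (∑ j, ((t i * t j : ℝ) : ℂ) • (S i * S j + S j * S i))
          = ((2 * (t i)^2 : ℝ) : ℂ) • (1 : Matrix (Fin d) (Fin d) ℂ) := by
      intro i
      rw [Finset.sum_eq_single i]
      · rw [hsq i]
        rw [show (1 : Matrix (Fin d) (Fin d) ℂ) + 1 = (2:ℂ) • 1 by
          rw [two_smul]]
        rw [smul_smul]
        congr 1
        push_cast
        ring
      · intro j _ hj
        rw [hanti i j (Ne.symm hj), smul_zero]
      · intro h; exact absurd (Finset.mem_univ i) h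
    have key2 : T * T + T * T = ((2 * s : ℝ) : ℂ) • 1 := by
      rw [key]
      rw [Finset.sum_congr rfl fun i _ => inner i]
      rw [← Finset.sum_smul]
      congr 1
      push_cast [hs]
      rw [Finset.mul_sum]
    have h2 : (2 : ℂ) • (T * T) = (2 : ℂ) • ((s : ℂ) • (1 : Matrix (Fin d) (Fin d) ℂ)) := by
      rw [two_smul, key2, smul_smul]
      congr 1
      push_cast
      ring
    exact smul_right_injective _ (two_ne_zero) h2
  -- A = c • 1 - T
  set A : Matrix (Fin d) (Fin d) ℂ := (c : ℂ) • 1 - T with hA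
  have hAherm : A.IsHermitian := by
    refine Matrix.IsHermitian.sub ?_ hTherm
    unfold Matrix.IsHermitian
    rw [conjTranspose_smul, conjTranspose_one]
    congr 1
    simp
  have hA2 : A * A = ((2 * c : ℝ) : ℂ) • A := by
    unfold A
    rw [sub_mul, mul_sub, mul_sub]
    rw [smul_mul_assoc, one_mul, smul_mul_assoc, one_mul]
    rw [mul_smul_comm, mul_one, hT2]
    rw [smul_smul, smul_sub]
    rw [smul_smul]
    have : ((c:ℂ) * c) = (s : ℂ) := by push_cast [← hcc]; ring
    rw [this]
    have h2c : ((2 * c : ℝ) : ℂ) * c = ((2 * s : ℝ) : ℂ) := by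
      push_cast [← hcc]; ring
    rw [h2c]
    have : ((2 * s : ℝ) : ℂ) • (1 : Matrix (Fin d) (Fin d) ℂ)
        = (s:ℂ) • 1 + (s:ℂ) • 1 := by
      rw [← add_smul]; congr 1; push_cast; ring
    rw [this]
    abel_nf
    congr 1
    push_cast
    module
  -- A is positive semidefinite
  have hApsd : A.PosSemidef := by
    refine Matrix.PosSemidef.of_dotProduct_mulVec_nonneg hAherm fun x => ?_
    have hnn : 0 ≤ star (A *ᵥ x) ⬝ᵥ (A *ᵥ x) := dotProduct_star_self_nonneg _
    have heq : star (A *ᵥ x) ⬝ᵥ (A *ᵥ x) = ((2 * c : ℝ) : ℂ) * (star x ⬝ᵥ (A *ᵥ x)) := by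
      rw [star_mulVec, hAherm.eq]
      rw [← dotProduct_mulVec, mulVec_mulVec, hA2]
      rw [smul_mulVec, dotProduct_smul, smul_eq_mul]
    rw [heq] at hnn
    set q : ℂ := star x ⬝ᵥ (A *ᵥ x) with hq
    rw [Complex.le_def] at hnn ⊢
    obtain ⟨h1, h2⟩ := hnn
    rw [Complex.mul_re, Complex.ofReal_re, Complex.ofReal_im, Complex.zero_re] at h1
    rw [Complex.mul_im, Complex.ofReal_re, Complex.ofReal_im, Complex.zero_im] at h2
    simp only [zero_mul, sub_zero, add_zero, zero_mul] at h1 h2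
    constructor
    · rw [Complex.zero_re]; nlinarith
    · rw [Complex.zero_im]
      have h2c : (0:ℝ) < 2 * c := by linarith
      symm at h2
      rcases mul_eq_zero.mp h2 with h | h
      · linarith
      · exact h.symm ▸ rfl
  -- trace (ρ * A) ≥ 0
  have htrA : 0 ≤ ((ρ * A).trace).re := by
    obtain ⟨B, hBB, hBh⟩ : ∃ B : Matrix (Fin d) (Fin d) ℂ, B * B = ρ ∧ Bᴴ = B := by
      open MatrixOrder in
      exact ⟨CFC.sqrt ρ, CFC.sqrt_mul_sqrt_self ρ hρ.nonneg,
        (CFC.sqrt_nonneg ρ).posSemidef.isHermitian.eq⟩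
    have : (ρ * A).trace = (Bᴴ * A * B).trace := by
      rw [hBh, ← hBB, Matrix.mul_assoc, Matrix.trace_mul_comm, Matrix.mul_assoc]
    rw [this]
    exact psd_trace_re_nonneg (hApsd.conjTranspose_mul_mul_same B)
  -- compute trace (ρ * A)
  have htrcalc : ((ρ * A).trace).re = c - s := by
    unfold A
    rw [mul_sub, mul_smul_comm, mul_one]
    rw [Matrix.trace_sub, Matrix.trace_smul, htr, smul_eq_mul, mul_one]
    rw [Complex.sub_re, Complex.ofReal_re]
    congr 1
    unfold T
    rw [Finset.mul_sum]
    have : ∀ i : Fin n, ρ * ((t i : ℂ) • S i) = (t i : ℂ) • (ρ * S i) := by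
      intro i; rw [mul_smul_comm]
    rw [Finset.sum_congr rfl fun i _ => this i]
    rw [Matrix.trace_sum]
    rw [Complex.re_sum]
    rw [hs]
    refine Finset.sum_congr rfl fun i _ => ?_
    rw [Matrix.trace_smul, smul_eq_mul]
    rw [Complex.mul_re, Complex.ofReal_re, Complex.ofReal_im]
    simp [ht, sq]
  rw [htrcalc] at htrA
  -- s ≤ c = √s ⇒ s ≤ 1
  have hsc : s ≤ c := by linarith
  have : s * s ≤ c * c := mul_le_mul hsc hsc (le_of_lt hsp) (le_of_lt hcp)
  rw [hcc] at this
  nlinarith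
end

section
/- Quadratic-form bound: let A_1,…,A_n be self-adjoint matrices with A_i² ≤ 1, ρ a density matrix, and w_1,…,w_n ≥ 0. Define the real symmetric n×n matrix M with entries M_{ij} = √(w_i w_j) · tr(ρ (A_i A_j + A_j A_i)/2). Then Σ_i w_i (tr ρ A_i)² ≤ λ_max(M), the largest eigenvalue of M. -/
open Matrix ComplexOrder

private lemma trace_psd_re_nonneg {d : ℕ} {P : Matrix (Fin d) (Fin d) ℂ}
    (hP : P.PosSemidef) : 0 ≤ P.trace.re := by
  have h : (0 : ℂ) ≤ P.trace := by
    rw [Matrix.trace]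
    refine Finset.sum_nonneg fun i _ => ?_
    have := hP.dotProduct_mulVec_nonneg (Pi.single i 1)
    simpa [dotProduct, Matrix.mulVec, Pi.single_apply] using this
  exact (Complex.le_def.mp h).1

private lemma trace_mul_herm_real {d : ℕ} {ρ B : Matrix (Fin d) (Fin d) ℂ}
    (hρ : ρ.IsHermitian) (hB : B.IsHermitian) :
    (ρ * B).trace = (((ρ * B).trace.re : ℝ) : ℂ) := by
  have h : (starRingEnd ℂ) ((ρ * B).trace) = (ρ * B).trace := by
    have := Matrix.trace_conjTranspose (ρ * B)
    rw [Matrix.conjTranspose_mul, hρ.eq, hB.eq, Matrix.trace_mul_comm] at this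
    exact this.symm
  exact (Complex.conj_eq_iff_re.mp h).symm

private lemma re_trace_mul_sq_nonneg {d : ℕ} {ρ C : Matrix (Fin d) (Fin d) ℂ}
    (hρ : ρ.PosSemidef) (hC : C.IsHermitian) : 0 ≤ (ρ * (C * C)).trace.re := by
  have h1 : (ρ * (C * C)).trace = (Cᴴ * ρ * C).trace := by
    rw [hC.eq, ← Matrix.mul_assoc, Matrix.trace_mul_comm, Matrix.mul_assoc]
  rw [h1]
  exact trace_psd_re_nonneg (hρ.conjTranspose_mul_mul_same C)

private lemma cs_trace {d : ℕ} {ρ B : Matrix (Fin d) (Fin d) ℂ}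
    (hρ : ρ.PosSemidef) (htr : ρ.trace = 1) (hB : B.IsHermitian) :
    ((ρ * B).trace.re) ^ 2 ≤ (ρ * (B * B)).trace.re := by
  set μ : ℝ := (ρ * B).trace.re with hμ
  set C : Matrix (Fin d) (Fin d) ℂ := B - (μ : ℂ) • 1 with hCdef
  have hC : C.IsHermitian := by
    show (B - (μ : ℂ) • 1).IsHermitian
    rw [Matrix.IsHermitian, Matrix.conjTranspose_sub, Matrix.conjTranspose_smul, hB.eq]
    simp [Complex.star_def, Complex.conj_ofReal]
  have hrB : (ρ * B).trace = (μ : ℂ) := trace_mul_herm_real hρ.isHermitian hB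
  have expand : (ρ * (C * C)).trace = (ρ * (B * B)).trace - (μ : ℂ) ^ 2 := by
    simp only [hCdef, Matrix.mul_sub, Matrix.sub_mul, Matrix.mul_smul, Matrix.smul_mul,
      Matrix.mul_one, Matrix.one_mul, smul_smul, Matrix.trace_sub, Matrix.trace_add,
      Matrix.trace_smul, htr, hrB, smul_eq_mul]
    ring
  have h0 : 0 ≤ (ρ * (C * C)).trace.re := re_trace_mul_sq_nonneg hρ hC
  rw [expand] at h0
  simp only [Complex.sub_re, ← Complex.ofReal_pow, Complex.ofReal_re] at h0
  linarith

private lemma rayleigh_upper {n : ℕ} {M : Matrix (Fin n) (Fin n) ℝ} (hM : M.IsHermitian)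
    (x : Fin n → ℝ) :
    x ⬝ᵥ M *ᵥ x ≤ (⨆ j, hM.eigenvalues j) * (x ⬝ᵥ x) := by
  rcases Nat.eq_zero_or_pos n with h0 | hpos
  · subst h0
    simp [dotProduct]
  set c : ℝ := ⨆ j, hM.eigenvalues j with hc
  have hcj : ∀ j, hM.eigenvalues j ≤ c :=
    fun j => le_ciSup (Set.Finite.bddAbove (Set.finite_range _)) j
  set V : Matrix (Fin n) (Fin n) ℝ := (hM.eigenvectorUnitary : Matrix (Fin n) (Fin n) ℝ) with hV
  have hVV : V * Vᴴ = 1 := by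
    rw [← Matrix.star_eq_conjTranspose]
    exact (Matrix.mem_unitaryGroup_iff).mp (hM.eigenvectorUnitary).2
  have hkey : c • (1 : Matrix (Fin n) (Fin n) ℝ) - M
      = V * (Matrix.diagonal (fun i => c - hM.eigenvalues i)) * Vᴴ := by
    have hspec : M = V * Matrix.diagonal hM.eigenvalues * Vᴴ := by
      have := hM.spectral_theorem
      rwa [Unitary.conjStarAlgAut_apply, Matrix.star_eq_conjTranspose] at this
    have hdiag : Matrix.diagonal (fun i => c - hM.eigenvalues i)
        = c • (1 : Matrix (Fin n) (Fin n) ℝ) - Matrix.diagonal hM.eigenvalues := by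
      rw [Matrix.smul_one_eq_diagonal, ← Matrix.diagonal_sub]
    rw [hdiag, Matrix.mul_sub, Matrix.sub_mul, ← hspec, Matrix.mul_smul, Matrix.mul_one,
      Matrix.smul_mul, hVV]
  have hpsd : (c • (1 : Matrix (Fin n) (Fin n) ℝ) - M).PosSemidef := by
    rw [hkey]
    exact Matrix.PosSemidef.mul_mul_conjTranspose_same
      (Matrix.PosSemidef.diagonal (fun i => sub_nonneg.mpr (hcj i))) V
  have h2 := hpsd.dotProduct_mulVec_nonneg x
  simp only [star_trivial, Matrix.sub_mulVec, Matrix.smul_mulVec, Matrix.one_mulVec,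
    dotProduct_sub, dotProduct_smul, smul_eq_mul] at h2
  linarith

/-- Quadratic-form bound: `Σ_i w_i (tr ρ A_i)² ≤ λ_max(M)` where
`M_{ij} = √(w_i w_j) · tr(ρ (A_i A_j + A_j A_i)/2)`. -/
theorem sum_weighted_sq_expectation_le_lambdaMax {n d : ℕ}
    (A : Fin n → Matrix (Fin d) (Fin d) ℂ)
    (hherm : ∀ i, (A i).IsHermitian)
    (hsq : ∀ i, (1 - A i * A i).PosSemidef)
    (ρ : Matrix (Fin d) (Fin d) ℂ) (hρ : ρ.PosSemidef) (htr : ρ.trace = 1)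
    (w : Fin n → ℝ) (hw : ∀ i, 0 ≤ w i)
    (M : Matrix (Fin n) (Fin n) ℝ)
    (hMdef : ∀ i j, M i j =
      Real.sqrt (w i * w j) * ((ρ * (A i * A j + A j * A i)).trace.re / 2))
    (hM : M.IsHermitian) :
    ∑ i, w i * ((ρ * A i).trace.re)^2 ≤ ⨆ j, hM.eigenvalues j := by
  classical
  -- the trace expectations are symmetric in `i, j` after taking real parts
  have hsym : ∀ i j, (ρ * (A j * A i)).trace.re = (ρ * (A i * A j)).trace.re := by
    intro i j
    have h : (ρ * (A j * A i)).trace = star ((ρ * (A i * A j)).trace) := by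
      rw [← Matrix.trace_conjTranspose, Matrix.conjTranspose_mul, Matrix.conjTranspose_mul,
        hρ.isHermitian.eq, (hherm i).eq, (hherm j).eq, Matrix.trace_mul_comm]
    rw [h]
    exact Complex.conj_re _
  have hMij : ∀ i j, M i j
      = (Real.sqrt (w i) * Real.sqrt (w j)) * (ρ * (A i * A j)).trace.re := by
    intro i j
    have h2 : (ρ * (A i * A j + A j * A i)).trace.re
        = (ρ * (A i * A j)).trace.re + (ρ * (A j * A i)).trace.re := by
      rw [Matrix.mul_add, Matrix.trace_add, Complex.add_re]
    rw [hMdef i j, Real.sqrt_mul (hw i), h2, hsym i j]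
    ring
  -- the Hermitian matrix associated to a real coefficient vector
  have hB : ∀ y : Fin n → ℝ,
      (∑ i, ((Real.sqrt (w i) * y i : ℝ) : ℂ) • A i).IsHermitian := by
    intro y
    have : (∑ i, ((Real.sqrt (w i) * y i : ℝ) : ℂ) • A i)ᴴ
        = ∑ i, ((Real.sqrt (w i) * y i : ℝ) : ℂ) • A i := by
      rw [Matrix.conjTranspose_sum]
      refine Finset.sum_congr rfl fun i _ => ?_
      rw [Matrix.conjTranspose_smul, (hherm i).eq]
      congr 1
      simp [Complex.star_def, Complex.conj_ofReal]
    exact this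
  -- quadratic form identity
  have hquad : ∀ y : Fin n → ℝ, y ⬝ᵥ M *ᵥ y
      = (ρ * ((∑ i, ((Real.sqrt (w i) * y i : ℝ) : ℂ) • A i)
          * (∑ i, ((Real.sqrt (w i) * y i : ℝ) : ℂ) • A i))).trace.re := by
    intro y
    have h1 : ρ * ((∑ i, ((Real.sqrt (w i) * y i : ℝ) : ℂ) • A i)
          * (∑ i, ((Real.sqrt (w i) * y i : ℝ) : ℂ) • A i))
        = ∑ i, ∑ j, (((Real.sqrt (w i) * y i) * (Real.sqrt (w j) * y j) : ℝ) : ℂ)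
            • (ρ * (A i * A j)) := by
      rw [Finset.sum_mul_sum, Finset.mul_sum]
      refine Finset.sum_congr rfl fun i _ => ?_
      rw [Finset.mul_sum]
      refine Finset.sum_congr rfl fun j _ => ?_
      rw [smul_mul_smul_comm, Matrix.mul_smul]
      congr 1
      push_cast
      ring
    rw [h1]
    simp only [Matrix.trace_sum, Matrix.trace_smul, Complex.re_sum, smul_eq_mul,
      Complex.re_ofReal_mul, dotProduct, Matrix.mulVec, Finset.mul_sum]
    refine Finset.sum_congr rfl fun i _ => ?_
    refine Finset.sum_congr rfl fun j _ => ?_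
    rw [hMij i j]
    ring
  -- `M` is positive semidefinite
  have hMpsd : M.PosSemidef := by
    refine Matrix.PosSemidef.of_dotProduct_mulVec_nonneg hM fun y => ?_
    rw [star_trivial, hquad y]
    exact re_trace_mul_sq_nonneg hρ (hB y)
  have hc0 : 0 ≤ ⨆ j, hM.eigenvalues j :=
    Real.iSup_nonneg fun j => hMpsd.eigenvalues_nonneg j
  -- the special coefficient vector
  set x : Fin n → ℝ := fun i => Real.sqrt (w i) * (ρ * A i).trace.re with hxdef
  have hS : ∑ i, w i * ((ρ * A i).trace.re)^2 = x ⬝ᵥ x := by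
    refine Finset.sum_congr rfl fun i _ => ?_
    simp only [hxdef, dotProduct]
    have := Real.mul_self_sqrt (hw i)
    nlinarith [this]
  -- expectation of `B x` equals `x ⬝ᵥ x`
  have hxB : (ρ * (∑ i, ((Real.sqrt (w i) * x i : ℝ) : ℂ) • A i)).trace.re = x ⬝ᵥ x := by
    rw [Finset.mul_sum, Matrix.trace_sum]
    simp only [Matrix.mul_smul, Matrix.trace_smul, Complex.re_sum, smul_eq_mul,
      Complex.re_ofReal_mul, dotProduct]
    refine Finset.sum_congr rfl fun i _ => ?_
    simp only [hxdef]
    ring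
  have hCS := cs_trace hρ htr (hB x)
  rw [hxB] at hCS
  have hR := rayleigh_upper hM x
  rw [hquad x] at hR
  rw [hS]
  have hSnn : 0 ≤ x ⬝ᵥ x := Finset.sum_nonneg fun i _ => mul_self_nonneg _
  rcases eq_or_lt_of_le hSnn with h0 | hpos
  · rw [← h0]; exact hc0
  · have h : (x ⬝ᵥ x) * (x ⬝ᵥ x) ≤ (⨆ j, hM.eigenvalues j) * (x ⬝ᵥ x) := by
      nlinarith [hCS, hR]
    exact le_of_mul_le_mul_right h hpos
end

section
/- Two-qubit identity: for every unit vector |ψ⟩ ∈ ℂ^4, ⟨I⊗Y⟩² + ⟨X⊗X⟩² + ⟨Z⊗Z⟩² − ⟨Y⊗Y⟩² ≤ 1, where ⟨A⟩ = ⟨ψ|A|ψ⟩; moreover equality is attained by the maximally entangled state (|00⟩+|11⟩)/√2. -/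
open Matrix Kronecker

namespace Stmt13

def X : Matrix (Fin 2) (Fin 2) ℂ := !![0, 1; 1, 0]
def Y : Matrix (Fin 2) (Fin 2) ℂ := !![0, -Complex.I; Complex.I, 0]
def Z : Matrix (Fin 2) (Fin 2) ℂ := !![1, 0; 0, -1]
def I2 : Matrix (Fin 2) (Fin 2) ℂ := 1

/-- Expectation value `⟨ψ|A|ψ⟩` (real part) of a two-qubit observable. -/
noncomputable def e (A : Matrix (Fin 2 × Fin 2) (Fin 2 × Fin 2) ℂ)
    (ψ : Fin 2 × Fin 2 → ℂ) : ℝ := (star ψ ⬝ᵥ A.mulVec ψ).re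

/-- The maximally entangled state `(|00⟩+|11⟩)/√2`. -/
noncomputable def ψME : Fin 2 × Fin 2 → ℂ :=
  fun p => if p.1 = p.2 then (1 / Real.sqrt 2 : ℝ) else 0

/-- Two-qubit identity: `⟨I⊗Y⟩² + ⟨X⊗X⟩² + ⟨Z⊗Z⟩² − ⟨Y⊗Y⟩² ≤ 1` for every unit
vector, with equality for the maximally entangled state. -/
theorem two_qubit_ladder_bound :
    (∀ ψ : Fin 2 × Fin 2 → ℂ, (∑ x, ‖ψ x‖^2 = 1) →
      e (I2 ⊗ₖ Y) ψ ^ 2 + e (X ⊗ₖ X) ψ ^ 2 + e (Z ⊗ₖ Z) ψ ^ 2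
        - e (Y ⊗ₖ Y) ψ ^ 2 ≤ 1) ∧
    (e (I2 ⊗ₖ Y) ψME ^ 2 + e (X ⊗ₖ X) ψME ^ 2 + e (Z ⊗ₖ Z) ψME ^ 2
        - e (Y ⊗ₖ Y) ψME ^ 2 = 1) := by
  constructor
  · intro ψ h
    simp only [Fintype.sum_prod_type, Fin.sum_univ_two,
      Complex.sq_norm, Complex.normSq_apply, Prod.mk_zero_zero, Prod.mk_one_one] at h
    simp only [e, dotProduct, mulVec, Fintype.sum_prod_type, Fin.sum_univ_two,
      kroneckerMap_apply, X, Y, Z, I2, Matrix.one_apply, Pi.star_apply,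
      Prod.mk_zero_zero, Prod.mk_one_one]
    norm_num [Complex.ext_iff, Complex.add_re, Complex.mul_re, Complex.mul_im]
    set a1 := (ψ 0).re; set a2 := (ψ 0).im
    set b1 := (ψ (0,1)).re; set b2 := (ψ (0,1)).im
    set c1 := (ψ (1,0)).re; set c2 := (ψ (1,0)).im
    set d1 := (ψ 1).re; set d2 := (ψ 1).im
    have key : (2*(a1*b2-a2*b1)+2*(c1*d2-c2*d1))^2
        + (2*(a1*d1+a2*d2)+2*(b1*c1+b2*c2))^2
        + (a1^2+a2^2-b1^2-b2^2-c1^2-c2^2+d1^2+d2^2)^2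
        - (-2*(a1*d1+a2*d2)+2*(b1*c1+b2*c2))^2
        = 1 - 4*(a1*b1+a2*b2-c1*d1-c2*d2)^2 - 4*(a1*c1+a2*c2-b1*d1-b2*d2)^2
          - 4*(a2*c1-a1*c2+b2*d1-b1*d2)^2 := by
      linear_combination (a1^2+a2^2+b1^2+b2^2+c1^2+c2^2+d1^2+d2^2 + 1) * h
    linarith [key, sq_nonneg (a1*b1+a2*b2-c1*d1-c2*d2),
      sq_nonneg (a1*c1+a2*c2-b1*d1-b2*d2), sq_nonneg (a2*c1-a1*c2+b2*d1-b1*d2)]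
  · have h2 : Real.sqrt 2 ^ 2 = 2 := Real.sq_sqrt (by norm_num)
    simp only [e, dotProduct, mulVec, Fintype.sum_prod_type, Fin.sum_univ_two,
      kroneckerMap_apply, X, Y, Z, I2, ψME, Matrix.one_apply, Pi.star_apply]
    norm_num [Complex.ext_iff, Complex.add_re, Complex.mul_re, Complex.mul_im]
    nlinarith [h2, Real.sqrt_nonneg 2]

end Stmt13
end

section
/- For every unit vector |ψ⟩ ∈ ℂ^4, ⟨I⊗X⟩² + ⟨I⊗Z⟩² + ⟨X⊗Y⟩² + ⟨Y⊗Y⟩² + ⟨Z⊗Y⟩² = 1, where ⟨A⟩ = ⟨ψ|A|ψ⟩. -/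
open Matrix Kronecker

namespace Stmt14

def X : Matrix (Fin 2) (Fin 2) ℂ := !![0, 1; 1, 0]
def Y : Matrix (Fin 2) (Fin 2) ℂ := !![0, -Complex.I; Complex.I, 0]
def Z : Matrix (Fin 2) (Fin 2) ℂ := !![1, 0; 0, -1]
def I2 : Matrix (Fin 2) (Fin 2) ℂ := 1

/-- Expectation value `⟨ψ|A|ψ⟩` (real part) of a two-qubit observable. -/
noncomputable def e (A : Matrix (Fin 2 × Fin 2) (Fin 2 × Fin 2) ℂ)
    (ψ : Fin 2 × Fin 2 → ℂ) : ℝ := (star ψ ⬝ᵥ A.mulVec ψ).re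

/-- For every unit vector `ψ ∈ ℂ⁴`,
`⟨I⊗X⟩² + ⟨I⊗Z⟩² + ⟨X⊗Y⟩² + ⟨Y⊗Y⟩² + ⟨Z⊗Y⟩² = 1`. -/
theorem c5_saur_sum_sq_eq_one (ψ : Fin 2 × Fin 2 → ℂ) (hψ : ∑ x, ‖ψ x‖^2 = 1) :
    e (I2 ⊗ₖ X) ψ ^ 2 + e (I2 ⊗ₖ Z) ψ ^ 2 + e (X ⊗ₖ Y) ψ ^ 2
      + e (Y ⊗ₖ Y) ψ ^ 2 + e (Z ⊗ₖ Y) ψ ^ 2 = 1 := by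
  simp only [Fintype.sum_prod_type, Fin.sum_univ_two,
    Complex.sq_norm, Complex.normSq_apply, Prod.mk_zero_zero, Prod.mk_one_one] at hψ
  simp only [e, dotProduct, mulVec, Fintype.sum_prod_type, Fin.sum_univ_two,
    kroneckerMap_apply, I2, X, Y, Z, Matrix.one_apply, Pi.star_apply, RCLike.star_def,
    Matrix.cons_val', Matrix.cons_val_zero, Matrix.cons_val_one, Matrix.head_cons,
    Matrix.empty_val', Matrix.cons_val_fin_one, Matrix.head_fin_const, Matrix.of_apply]
  norm_num [Complex.add_re, Complex.mul_re, Complex.mul_im, Complex.conj_re, Complex.conj_im,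
    Complex.I_re, Complex.I_im, Complex.neg_re, Complex.neg_im]
  set a := (ψ 0).re; set b := (ψ 0).im
  set c := (ψ (0,1)).re; set d := (ψ (0,1)).im
  set p := (ψ (1,0)).re; set q := (ψ (1,0)).im
  set r := (ψ 1).re; set s := (ψ 1).im
  linear_combination (a*a+b*b+c*c+d*d+p*p+q*q+r*r+s*s + 1) * hψ

end Stmt14
end
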